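/- Newton step for the homogeneous linear differential system: let R be a commutative ring which is a ℚ-algebra, m ≥ 1 and k ≥ 0. Let A, M, W be m×m matrices of formal power series in z over R such that the constant-coefficient matrix of M is the identity, M′ = A·M, and W ≡ M mod z^{k+1} entrywise (so W is invertible over the matrix ring of power series). Let V be the m×m matrix of power series with zero constant coefficients satisfying V′ = W^{-1}·(A·W − W′). Then W + W·V ≡ M mod z^{2k+2} entrywise. -/

import Mathlib

open PowerSeries

private lemma ns_mul_coeff_zero {R : Type*} [CommRing R] {f g : PowerSeries R} {a b : ℕ}
    (hf : ∀ p < a, coeff p f = 0) (hg : ∀ q < b, coeff q g = 0) :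
    ∀ n < a + b, coeff n (f * g) = 0 := by
  intro n hn
  rw [coeff_mul]
  apply Finset.sum_eq_zero
  rintro ⟨p, q⟩ hpq
  replace hpq : p + q = n := Finset.HasAntidiagonal.mem_antidiagonal.mp hpq
  rcases lt_or_ge p a with h | h
  · rw [hf p h, zero_mul]
  · rw [hg q (by omega), mul_zero]

private lemma ns_matmul_coeff_zero {R : Type*} [CommRing R] {m : ℕ}
    {X Y : Matrix (Fin m) (Fin m) (PowerSeries R)} {a b : ℕ}
    (hX : ∀ i j, ∀ p < a, coeff p (X i j) = 0)
    (hY : ∀ i j, ∀ q < b, coeff q (Y i j) = 0) :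
    ∀ i j, ∀ n < a + b, coeff n ((X * Y) i j) = 0 := by
  intro i j n hn
  rw [Matrix.mul_apply, map_sum]
  exact Finset.sum_eq_zero fun l _ => ns_mul_coeff_zero (hX i l) (hY l j) n hn

private lemma ns_coeff_derivativeFun {R : Type*} [CommRing R] (f : PowerSeries R) (n : ℕ) :
    coeff n (derivativeFun f) = coeff (n + 1) f * (n + 1) :=
  coeff_derivative f n

private lemma ns_coeff_zero_of_deriv {R : Type*} [CommRing R] [Algebra ℚ R]
    {f : PowerSeries R} {n : ℕ}
    (h : coeff n (derivativeFun f) = 0) : coeff (n + 1) f = 0 := by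
  rw [ns_coeff_derivativeFun] at h
  have h1 : IsUnit (((n + 1 : ℕ) : ℚ)) := isUnit_iff_ne_zero.mpr (by positivity)
  have hu := h1.map (algebraMap ℚ R)
  rw [map_natCast, Nat.cast_add, Nat.cast_one] at hu
  exact (IsUnit.mul_left_eq_zero hu).mp h

private lemma ns_derivFun_sub {R : Type*} [CommRing R] (f g : PowerSeries R) :
    derivativeFun (f - g) = derivativeFun f - derivativeFun g := by
  ext n
  simp [ns_coeff_derivativeFun, sub_mul]

private lemma ns_derivFun_zero {R : Type*} [CommRing R] :
    derivativeFun (0 : PowerSeries R) = 0 := by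
  ext n
  simp [ns_coeff_derivativeFun]

private lemma ns_derivFun_sum {R : Type*} [CommRing R] {ι : Type*} (s : Finset ι)
    (f : ι → PowerSeries R) :
    derivativeFun (∑ l ∈ s, f l) = ∑ l ∈ s, derivativeFun (f l) := by
  classical
  induction s using Finset.induction_on with
  | empty => simpa using ns_derivFun_zero
  | insert _ _ h ih => rw [Finset.sum_insert h, Finset.sum_insert h, derivativeFun_add, ih]

private noncomputable def ns_mderiv {R : Type*} [CommRing R] {m : ℕ}
    (X : Matrix (Fin m) (Fin m) (PowerSeries R)) : Matrix (Fin m) (Fin m) (PowerSeries R) :=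
  Matrix.of fun i j => derivativeFun (X i j)

private lemma ns_mderiv_add {R : Type*} [CommRing R] {m : ℕ}
    (X Y : Matrix (Fin m) (Fin m) (PowerSeries R)) :
    ns_mderiv (X + Y) = ns_mderiv X + ns_mderiv Y := by
  apply Matrix.ext
  intro i j
  simp [ns_mderiv, derivativeFun_add]

private lemma ns_mderiv_sub {R : Type*} [CommRing R] {m : ℕ}
    (X Y : Matrix (Fin m) (Fin m) (PowerSeries R)) :
    ns_mderiv (X - Y) = ns_mderiv X - ns_mderiv Y := by
  apply Matrix.ext
  intro i j
  simp [ns_mderiv, ns_derivFun_sub]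

private lemma ns_mderiv_mul {R : Type*} [CommRing R] {m : ℕ}
    (X Y : Matrix (Fin m) (Fin m) (PowerSeries R)) :
    ns_mderiv (X * Y) = ns_mderiv X * Y + X * ns_mderiv Y := by
  apply Matrix.ext
  intro i j
  simp only [ns_mderiv, Matrix.of_apply, Matrix.add_apply, Matrix.mul_apply]
  have : ∀ l, derivativeFun (X i l * Y l j)
      = derivativeFun (X i l) * Y l j + X i l * derivativeFun (Y l j) := by
    intro l
    rw [derivativeFun_mul]
    simp only [smul_eq_mul]
    ring
  calc derivativeFun (∑ l, X i l * Y l j)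
      = ∑ l, derivativeFun (X i l * Y l j) := ns_derivFun_sum _ _
    _ = ∑ l, (derivativeFun (X i l) * Y l j + X i l * derivativeFun (Y l j)) := by
        exact Finset.sum_congr rfl fun l _ => this l
    _ = _ := by rw [Finset.sum_add_distrib]

/-- **Newton step for the homogeneous linear differential system.**  Over a commutative
`ℚ`-algebra `R`, let `M' = A·M` with the constant-coefficient matrix of `M` equal to the
identity, and let `W ≡ M mod z^(k+1)` entrywise (so `W` is invertible over the matrix
ring of power series).  If `V` is the matrix of power series with zero constant
coefficients such that `V' = W⁻¹·(A·W - W')`, then `W + W·V ≡ M mod z^(2k+2)`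
entrywise. -/
theorem newton_step_homogeneous_system {R : Type*} [CommRing R] [Algebra ℚ R]
    {m : ℕ} (hm : 1 ≤ m) (k : ℕ)
    (A M W : Matrix (Fin m) (Fin m) (PowerSeries R))
    (hM0 : M.map (PowerSeries.constantCoeff (R := R)) = 1)
    (hM' : ∀ i j, PowerSeries.derivativeFun (M i j) = (A * M) i j)
    (hWM : ∀ i j, ∀ n ≤ k, PowerSeries.coeff n (W i j) = PowerSeries.coeff n (M i j))
    (V : Matrix (Fin m) (Fin m) (PowerSeries R))
    (hV0 : ∀ i j, PowerSeries.constantCoeff (V i j) = 0)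
    (hV' : ∀ i j, PowerSeries.derivativeFun (V i j) =
      (Ring.inverse W *
        (A * W - Matrix.of fun a b => PowerSeries.derivativeFun (W a b))) i j) :
    IsUnit W ∧
      ∀ i j, ∀ n < 2 * k + 2,
        PowerSeries.coeff n ((W + W * V) i j) = PowerSeries.coeff n (M i j) := by
  classical
  have hW0 : ∀ i j, coeff 0 (W i j) = coeff 0 (M i j) := fun i j => hWM i j 0 (Nat.zero_le k)
  -- W is a unit
  have hWmap : W.map (constantCoeff (R := R)) = 1 := by
    rw [← hM0]
    ext i j
    simp only [Matrix.map_apply, ← coeff_zero_eq_constantCoeff_apply]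
    exact hW0 i j
  have hWunit : IsUnit W := by
    rw [Matrix.isUnit_iff_isUnit_det, PowerSeries.isUnit_iff_constantCoeff]
    have : constantCoeff W.det = (W.map (constantCoeff (R := R))).det := RingHom.map_det _ _
    rw [this, hWmap, Matrix.det_one]
    exact isUnit_one
  refine ⟨hWunit, ?_⟩
  set W' : Matrix (Fin m) (Fin m) (PowerSeries R) :=
    Matrix.of fun a b => PowerSeries.derivativeFun (W a b) with hW'def
  set E : Matrix (Fin m) (Fin m) (PowerSeries R) := W' - A * W with hEdef
  set D : Matrix (Fin m) (Fin m) (PowerSeries R) := W + W * V - M with hDdef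
  have hMmat : ns_mderiv M = A * M := by
    apply Matrix.ext
    intro i j
    exact hM' i j
  have hVmat : ns_mderiv V = Ring.inverse W * (A * W - W') := by
    apply Matrix.ext
    intro i j
    exact hV' i j
  -- derivative of D
  have hDderiv : ns_mderiv D = A * D + E * V := by
    rw [hDdef, ns_mderiv_sub, ns_mderiv_add, ns_mderiv_mul, hMmat, hVmat]
    have h1 : ns_mderiv W = W' := rfl
    have h4 : W * (Ring.inverse W * (A * W - W')) = A * W - W' :=
      Ring.mul_inverse_cancel_left _ _ hWunit
    rw [h1, h4, hEdef]
    noncomm_ring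
  -- W - M divisible by z^(k+1)
  have hWMdiv : ∀ i j, ∀ n < k + 1, coeff n ((W - M) i j) = 0 := by
    intro i j n hn
    rw [Matrix.sub_apply, map_sub, hWM i j n (by omega), sub_self]
  -- E divisible by z^k
  have hEeq : E = ns_mderiv (W - M) - A * (W - M) := by
    rw [ns_mderiv_sub, hMmat]
    have h1 : ns_mderiv W = W' := rfl
    rw [h1, hEdef]
    noncomm_ring
  have hEdiv : ∀ i j, ∀ n < k, coeff n (E i j) = 0 := by
    intro i j n hn
    rw [hEeq, Matrix.sub_apply, map_sub]
    have h1 : coeff n (ns_mderiv (W - M) i j) = 0 := by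
      show coeff n (derivativeFun ((W - M) i j)) = 0
      rw [ns_coeff_derivativeFun, hWMdiv i j (n + 1) (by omega), zero_mul]
    have h2 : coeff n ((A * (W - M)) i j) = 0 := by
      have hA : ∀ (i j : Fin m), ∀ p < 0, coeff p (A i j) = 0 :=
        fun _ _ p hp => absurd hp (Nat.not_lt_zero p)
      exact ns_matmul_coeff_zero hA hWMdiv i j n (by omega)
    rw [h1, h2, sub_zero]
  -- V divisible by z^(k+1)
  have hVdiv : ∀ i j, ∀ n < k + 1, coeff n (V i j) = 0 := by
    intro i j n hn
    cases n with
    | zero => rw [coeff_zero_eq_constantCoeff_apply]; exact hV0 i j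
    | succ p =>
      apply ns_coeff_zero_of_deriv
      rw [hV' i j]
      have hinv : ∀ (i j : Fin m), ∀ q < 0, coeff q (Ring.inverse W i j) = 0 :=
        fun _ _ q hq => absurd hq (Nat.not_lt_zero q)
      have hAWW' : ∀ (i j : Fin m), ∀ q < k, coeff q ((A * W - W') i j) = 0 := by
        intro i j q hq
        have : coeff q (E i j) = 0 := hEdiv i j q hq
        rw [hEdef, Matrix.sub_apply, map_sub, sub_eq_zero] at this
        rw [Matrix.sub_apply, map_sub, this, sub_self]
      exact ns_matmul_coeff_zero hinv hAWW' i j p (by omega)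
  -- E * V divisible by z^(2k+1)
  have hEVdiv : ∀ i j, ∀ n < 2 * k + 1, coeff n ((E * V) i j) = 0 := by
    intro i j n hn
    exact ns_matmul_coeff_zero hEdiv hVdiv i j n (by omega)
  -- constant term of D is zero
  have hD0 : ∀ i j, coeff 0 (D i j) = 0 := by
    intro i j
    rw [hDdef]
    simp only [Matrix.sub_apply, Matrix.add_apply, map_sub, map_add]
    have hWV : coeff 0 ((W * V) i j) = 0 := by
      rw [Matrix.mul_apply, map_sum]
      apply Finset.sum_eq_zero
      intro l _
      rw [coeff_zero_eq_constantCoeff_apply, map_mul, hV0 l j, mul_zero]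
    rw [hW0 i j, hWV]
    ring
  -- bootstrap induction
  have key : ∀ N, N ≤ 2 * k + 2 → ∀ i j, ∀ n, n < N → coeff n (D i j) = 0 := by
    intro N
    induction N with
    | zero => intro _ i j n hn; omega
    | succ N ih =>
      intro hN i j n hn
      rcases Nat.lt_succ_iff_lt_or_eq.mp hn with h | h
      · exact ih (by omega) i j n h
      · subst h
        cases n with
        | zero => exact hD0 i j
        | succ p =>
          apply ns_coeff_zero_of_deriv
          have hentry : derivativeFun (D i j) = (A * D + E * V) i j := by
            have := congrFun (congrFun hDderiv i) j
            exact this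
          rw [hentry, Matrix.add_apply, map_add]
          have h1 : coeff p ((A * D) i j) = 0 := by
            have hA : ∀ (i j : Fin m), ∀ q < 0, coeff q (A i j) = 0 :=
              fun _ _ q hq => absurd hq (Nat.not_lt_zero q)
            have hDd : ∀ (i j : Fin m), ∀ q < p + 1, coeff q (D i j) = 0 :=
              fun i j q hq => ih (by omega) i j q (by omega)
            exact ns_matmul_coeff_zero hA hDd i j p (by omega)
          have h2 : coeff p ((E * V) i j) = 0 := hEVdiv i j p (by omega)
          rw [h1, h2, add_zero]
  intro i j n hn
  have h := key (2 * k + 2) le_rfl i j n hn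
  rw [hDdef, Matrix.sub_apply, map_sub, sub_eq_zero] at h
  exact h
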